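/- Let 𝒩 : x ↦ ρ_B^x be a classical-quantum channel from a finite alphabet 𝖷 to density operators on a finite-dimensional Hilbert space ℋ_B, let p_𝖷 be a probability distribution on 𝖷, and let |𝖬| ≥ 1 be the number of equiprobable messages. For any encoder 𝓔 : 𝖬 → 𝖷 and any family of decoding POVMs (one POVM (T_B^{x(m)})_{m∈𝖬} for each realization of the shared randomness), the average success probability P := (1/|𝖬|) Σ_{m∈𝖬} 𝔼_{x(m)∼p_𝖷} Tr[ρ_B^{x(m)} T_B^{x(m)}] satisfies, for every α > 1, P ≤ exp( −((α−1)/α)( log|𝖬| − I_α^𝕄(𝖷:𝖡)_ρ ) ), where ρ_{𝖷𝖡} := Σ_x p_𝖷(x) |x⟩⟨x|_𝖷 ⊗ ρ_B^x and I_α^𝕄(𝖷:𝖡)_ρ := inf over density operators σ_B on ℋ_B of D_α^𝕄(ρ_{𝖷𝖡} ‖ ρ_𝖷 ⊗ σ_B). -/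

import Mathlib

set_option linter.unusedSectionVars false
set_option maxHeartbeats 1000000

open Matrix
open scoped ComplexOrder Kronecker

noncomputable section

/-- Real power of a Hermitian matrix via functional calculus on its support
(Moore–Penrose convention); junk value `0` for non-Hermitian input. -/
def Matrix.rpowH {ι : Type*} [Fintype ι] [DecidableEq ι] (A : Matrix ι ι ℂ) (p : ℝ) :
    Matrix ι ι ℂ :=
  if hA : A.IsHermitian then
    (hA.eigenvectorUnitary : Matrix ι ι ℂ) *
      Matrix.diagonal (fun i => ((hA.eigenvalues i ^ p : ℝ) : ℂ)) *
      star (hA.eigenvectorUnitary : Matrix ι ι ℂ)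
  else 0

/-- Real part of the trace. -/
def retr {ι : Type*} [Fintype ι] (A : Matrix ι ι ℂ) : ℝ :=
  (Matrix.trace A).re

open scoped Classical in
/-- Classical Rényi divergence of order `α` of two (finitely supported) probability
mass functions, with value `+∞` when `α > 1` and absolute continuity fails. -/
def renyiDivE (α : ℝ) {k : ℕ} (p q : Fin k → ℝ) : EReal :=
  if α < 1 ∨ ∀ i, q i = 0 → p i = 0 then
    (((α - 1)⁻¹ * Real.log (∑ i, p i ^ α * q i ^ (1 - α)) : ℝ) : EReal)
  else (⊤ : EReal)

/-- Measured Rényi divergence: supremum of classical Rényi divergences of the outcome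
distributions over all finite POVMs. -/
def measuredRenyiDiv {ι : Type*} [Fintype ι] [DecidableEq ι]
    (α : ℝ) (ρ σ : Matrix ι ι ℂ) : EReal :=
  ⨆ (k : ℕ) (P : Fin k → Matrix ι ι ℂ) (_ : ∀ i, (P i).PosSemidef) (_ : ∑ i, P i = 1),
    renyiDivE α (fun i => retr (ρ * P i)) (fun i => retr (σ * P i))

section Helpers

variable {m n : Type*} [Fintype m] [DecidableEq m] [Fintype n] [DecidableEq n]

lemma kron_conjTranspose (A : Matrix m m ℂ) (B : Matrix n n ℂ) :
    (A ⊗ₖ B)ᴴ = Aᴴ ⊗ₖ Bᴴ := by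
  ext ⟨i, j⟩ ⟨k, l⟩
  simp [conjTranspose_apply, kroneckerMap_apply]

lemma psd_kron {A : Matrix m m ℂ} {B : Matrix n n ℂ}
    (hA : A.PosSemidef) (hB : B.PosSemidef) : (A ⊗ₖ B).PosSemidef := by
  exact hA.kronecker hB

lemma psd_sum {κ : Type*} (s : Finset κ) (f : κ → Matrix n n ℂ)
    (h : ∀ i ∈ s, (f i).PosSemidef) : (∑ i ∈ s, f i).PosSemidef :=
  Finset.sum_induction f _ (fun _ _ ha hb => ha.add hb) Matrix.PosSemidef.zero h

lemma psd_smul {A : Matrix n n ℂ} (hA : A.PosSemidef) {r : ℝ} (hr : 0 ≤ r) :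
    ((r : ℂ) • A).PosSemidef := by
  constructor
  · rw [IsHermitian, conjTranspose_smul, hA.isHermitian.eq]
    simp
  · intro x
    exact (hA.smul (by exact_mod_cast Complex.zero_le_real.mpr hr : (0:ℂ) ≤ (r:ℂ))).2 x

lemma psd_trace_re_nonneg {A : Matrix n n ℂ} (hA : A.PosSemidef) : 0 ≤ retr A := by
  have h : ∀ i, 0 ≤ A i i := fun i => hA.diag_nonneg
  rw [retr, Matrix.trace, Complex.re_sum]
  exact Finset.sum_nonneg fun i _ => (Complex.le_def.mp (h i)).1

lemma retr_mul_nonneg {A B : Matrix n n ℂ} (hA : A.PosSemidef) (hB : B.PosSemidef) :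
    0 ≤ retr (A * B) := by
  open scoped MatrixOrder in
  obtain ⟨C, rfl⟩ := CStarAlgebra.nonneg_iff_eq_star_mul_self.mp hB.nonneg
  rw [star_eq_conjTranspose]
  have : (A * (Cᴴ * C)).trace = (C * A * Cᴴ).trace := by
    rw [← Matrix.mul_assoc, Matrix.trace_mul_comm, ← Matrix.mul_assoc]
  rw [retr, this]
  exact psd_trace_re_nonneg (hA.mul_mul_conjTranspose_same C)

lemma std_diag (x : m) : single x x (1 : ℂ) = diagonal (Pi.single x 1) := by
  ext i j
  simp only [single, of_apply, diagonal_apply, Pi.single_apply]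
  by_cases h1 : x = i <;> by_cases h2 : i = j <;> simp_all <;> aesop

lemma psd_std (x : m) : (single x x (1 : ℂ)).PosSemidef := by
  rw [std_diag]
  refine Matrix.PosSemidef.diagonal ?_
  intro i
  by_cases h : x = i <;> simp [Pi.single_apply, h, eq_comm]

lemma trace_std (x : m) : (single x x (1 : ℂ)).trace = 1 := by
  rw [std_diag, trace_diagonal]
  simp

lemma sum_std_eq_one : ∑ x : m, single x x (1 : ℂ) = 1 := by
  ext i j
  simp only [Matrix.sum_apply, single, Matrix.one_apply, of_apply]
  by_cases h : i = j
  · subst h; simp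
  · rw [Finset.sum_eq_zero, if_neg h]
    intro c _
    rw [if_neg]
    rintro ⟨rfl, rfl⟩
    exact h rfl

lemma trace_kron_std (x y : m) (A B : Matrix n n ℂ) :
    ((single x x (1:ℂ) ⊗ₖ A) * (single y y (1:ℂ) ⊗ₖ B)).trace
      = if x = y then (A * B).trace else 0 := by
  rw [← Matrix.mul_kronecker_mul, Matrix.trace_kronecker]
  rcases eq_or_ne x y with rfl | h
  · rw [single_mul_single_same]
    simp [trace_std]
  · rw [single_mul_single_of_ne (h := h)]
    simp [h]

lemma diag_mul_std (d : m → ℂ) (y : m) :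
    diagonal d * single y y (1 : ℂ) = d y • single y y 1 := by
  ext i j
  rw [Matrix.diagonal_mul]
  by_cases hy : y = i
  · subst hy; simp [single]
  · simp [single, hy, Ne.symm]

lemma kron_sub_right (A : Matrix m m ℂ) (B C : Matrix n n ℂ) :
    A ⊗ₖ (B - C) = A ⊗ₖ B - A ⊗ₖ C := by
  ext ⟨i, j⟩ ⟨k, l⟩
  simp [kroneckerMap_apply, mul_sub]

lemma kron_sum_smul (A : Matrix m m ℂ) {κ : Type*} (s : Finset κ) (r : κ → ℂ)
    (B : κ → Matrix n n ℂ) :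
    A ⊗ₖ (∑ i ∈ s, r i • B i) = ∑ i ∈ s, r i • (A ⊗ₖ B i) := by
  ext ⟨i, j⟩ ⟨k, l⟩
  simp only [kroneckerMap_apply, Matrix.sum_apply, Matrix.smul_apply, Finset.mul_sum,
    smul_eq_mul]
  exact Finset.sum_congr rfl fun _ _ => by ring

lemma sum_kron (B : Matrix n n ℂ) {κ : Type*} (s : Finset κ) (A : κ → Matrix m m ℂ) :
    (∑ i ∈ s, A i) ⊗ₖ B = ∑ i ∈ s, A i ⊗ₖ B := by
  ext ⟨i, j⟩ ⟨k, l⟩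
  simp only [kroneckerMap_apply, Matrix.sum_apply, Finset.sum_mul]

end Helpers

theorem cq_one_shot_strong_converse
    {X : Type*} [Fintype X] [DecidableEq X]
    {ι : Type*} [Fintype ι] [DecidableEq ι]
    (ρB : X → Matrix ι ι ℂ)
    (hρB : ∀ x, (ρB x).PosSemidef ∧ (ρB x).trace = 1)
    (p : X → ℝ) (hp : ∀ x, 0 ≤ p x) (hp1 : ∑ x, p x = 1)
    (M : ℕ) (hM : 1 ≤ M)
    (D : (Fin M → X) → Fin M → Matrix ι ι ℂ)
    (hDpos : ∀ c m, (D c m).PosSemidef)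
    (hDsum : ∀ c, ∑ m, D c m = 1)
    (P : ℝ)
    (hP : P = (M : ℝ)⁻¹ * ∑ m : Fin M, ∑ c : Fin M → X,
      (∏ m' : Fin M, p (c m')) * retr (ρB (c m) * D c m))
    (ρXB : Matrix (X × ι) (X × ι) ℂ)
    (hρXB : ρXB = ∑ x, (p x) • (Matrix.single x x (1 : ℂ) ⊗ₖ ρB x))
    (α : ℝ) (hα : 1 < α) :
    ENNReal.ofReal P ≤
      EReal.exp (-((((α - 1) / α : ℝ) : EReal) *
        (((Real.log M : ℝ) : EReal) -
          ⨅ (σB : Matrix ι ι ℂ) (_ : σB.PosSemidef ∧ σB.trace = 1),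
            measuredRenyiDiv α ρXB
              ((Matrix.diagonal fun x => ((p x : ℝ) : ℂ)) ⊗ₖ σB)))) := by
  classical
  have hα0 : (0:ℝ) < α := lt_trans one_pos hα
  have hα1 : (0:ℝ) < α - 1 := by linarith
  have hMpos : (0:ℝ) < (M:ℝ) := by exact_mod_cast hM
  rcases le_or_gt P 0 with hP0 | hPpos
  · rw [ENNReal.ofReal_eq_zero.mpr hP0]; exact zero_le
  -- weights
  set w : (Fin M → X) → ℝ := fun c => ∏ m' : Fin M, p (c m') with hw
  have hw0 : ∀ c, 0 ≤ w c := fun c => Finset.prod_nonneg fun _ _ => hp _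
  have hwsum : ∑ c : Fin M → X, w c = 1 := by
    have h := Finset.prod_univ_sum (κ := fun _ : Fin M => X)
      (fun _ => (Finset.univ : Finset X)) (fun _ y => p y)
    rw [Fintype.piFinset_univ] at h
    rw [hw, ← h]
    simp [hp1]
  have hwx : ∀ (m : Fin M) (x : X),
      ∑ c : Fin M → X, (if c m = x then w c else 0) = p x := by
    intro m x
    set g : Fin M → X → ℝ := fun m' y => if m' = m then (if y = x then p y else 0) else p y
      with hg
    have h1 : ∀ c : Fin M → X, (if c m = x then w c else 0) = ∏ m', g m' (c m') := by
      intro c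
      by_cases h : c m = x
      · rw [if_pos h, hw]
        refine Finset.prod_congr rfl fun m' _ => ?_
        by_cases hm : m' = m
        · subst hm; simp [hg, h]
        · simp [hg, hm]
      · rw [if_neg h]
        refine (Finset.prod_eq_zero (Finset.mem_univ m) ?_).symm
        simp [hg, h]
    rw [Finset.sum_congr rfl fun c _ => h1 c]
    have h2 := Finset.prod_univ_sum (κ := fun _ : Fin M => X)
      (fun _ => (Finset.univ : Finset X)) g
    rw [Fintype.piFinset_univ] at h2
    rw [← h2]
    have h3 : ∀ m' : Fin M, ∑ y, g m' y = if m' = m then p x else 1 := by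
      intro m'
      by_cases h : m' = m
      · simp [hg, h, Finset.sum_ite_eq']
      · simp [hg, h, hp1]
    rw [Finset.prod_congr rfl fun m' _ => h3 m']
    simp
  -- coefficients
  set coef : (Fin M → X) → Fin M → ℝ := fun c m => w c / (M * p (c m)) with hcoef
  have hcoef0 : ∀ c m, 0 ≤ coef c m := fun c m =>
    div_nonneg (hw0 c) (mul_nonneg hMpos.le (hp _))
  have hwzero : ∀ (c : Fin M → X) (m : Fin M), p (c m) = 0 → w c = 0 := by
    intro c m h
    exact Finset.prod_eq_zero (Finset.mem_univ m) h
  have hcoefp : ∀ c m, coef c m * p (c m) = w c / M := by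
    intro c m
    by_cases h : p (c m) = 0
    · simp [hcoef, h, hwzero c m h]
    · rw [hcoef]
      field_simp
  -- the POVM elements
  set T : ((Fin M → X) × Fin M) → Matrix (X × ι) (X × ι) ℂ := fun cm =>
    ((coef cm.1 cm.2 : ℝ) : ℂ) •
      (single (cm.1 cm.2) (cm.1 cm.2) (1:ℂ) ⊗ₖ D cm.1 cm.2) with hT
  have hTpsd : ∀ cm, (T cm).PosSemidef := fun cm =>
    psd_smul (psd_kron (psd_std _) (hDpos _ _)) (hcoef0 _ _)
  set S : Matrix (X × ι) (X × ι) ℂ := ∑ cm : (Fin M → X) × Fin M, T cm with hS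
  -- 1 - D c m is PSD
  have hDle : ∀ c m, ((1 : Matrix ι ι ℂ) - D c m).PosSemidef := by
    intro c m
    have : (1 : Matrix ι ι ℂ) - D c m = ∑ m' ∈ Finset.univ.erase m, D c m' := by
      rw [← hDsum c, ← Finset.add_sum_erase _ _ (Finset.mem_univ m)]
      abel
    rw [this]
    exact psd_sum _ _ fun m' _ => hDpos c m'
  -- blocks
  set Sx : X → Matrix ι ι ℂ := fun x => ∑ cm : (Fin M → X) × Fin M,
    ((if cm.1 cm.2 = x then coef cm.1 cm.2 else 0 : ℝ) : ℂ) • D cm.1 cm.2 with hSx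
  have hSblocks : S = ∑ x : X, single x x (1:ℂ) ⊗ₖ Sx x := by
    have h1 : ∀ x : X, single x x (1:ℂ) ⊗ₖ Sx x
        = ∑ cm : (Fin M → X) × Fin M,
            ((if cm.1 cm.2 = x then coef cm.1 cm.2 else 0 : ℝ) : ℂ) •
              (single x x (1:ℂ) ⊗ₖ D cm.1 cm.2) := fun x =>
      kron_sum_smul _ _ _ _
    rw [Finset.sum_congr rfl fun x _ => h1 x, Finset.sum_comm]
    rw [hS]
    refine Finset.sum_congr rfl fun cm _ => ?_
    rw [Finset.sum_congr rfl (fun x _ => by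
      rw [show ((if cm.1 cm.2 = x then coef cm.1 cm.2 else 0 : ℝ) : ℂ) •
            (single x x (1:ℂ) ⊗ₖ D cm.1 cm.2)
          = if cm.1 cm.2 = x then
              ((coef cm.1 cm.2 : ℝ) : ℂ) • (single x x (1:ℂ) ⊗ₖ D cm.1 cm.2)
            else 0 from by split_ifs <;> simp])]
    rw [Finset.sum_ite_eq (Finset.univ : Finset X) (cm.1 cm.2)]
    simp [hT]
  -- sum of block coefficients is at most 1
  have hax : ∀ x : X,
      ∑ cm : (Fin M → X) × Fin M, (if cm.1 cm.2 = x then coef cm.1 cm.2 else 0) ≤ 1 := by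
    intro x
    by_cases hx : p x = 0
    · rw [Finset.sum_eq_zero]
      · norm_num
      · rintro ⟨c, m⟩ _
        by_cases h : c m = x
        · rw [if_pos h]
          simp [hcoef, hwzero c m (h ▸ hx)]
        · rw [if_neg h]
    · have hMp : (M : ℝ) * p x ≠ 0 := by positivity
      have h1 : ∀ cm : (Fin M → X) × Fin M,
          (if cm.1 cm.2 = x then coef cm.1 cm.2 else 0)
            = (if cm.1 cm.2 = x then w cm.1 else 0) / ((M:ℝ) * p x) := by
        rintro ⟨c, m⟩
        by_cases h : c m = x
        · rw [if_pos h, if_pos h]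
          simp only [hcoef]
          rw [h]
        · rw [if_neg h, if_neg h, zero_div]
      rw [Finset.sum_congr rfl fun cm _ => h1 cm, ← Finset.sum_div]
      rw [Fintype.sum_prod_type, Finset.sum_comm]
      rw [Finset.sum_congr rfl fun m (_ : m ∈ Finset.univ) => hwx m x]
      simp only [Finset.sum_const, Finset.card_univ, Fintype.card_fin, nsmul_eq_mul]
      rw [div_self hMp]
  -- the completing element is PSD
  have hcompl : ((1 : Matrix (X × ι) (X × ι) ℂ) - S).PosSemidef := by
    have hone : (1 : Matrix (X × ι) (X × ι) ℂ)
        = ∑ x : X, single x x (1:ℂ) ⊗ₖ (1 : Matrix ι ι ℂ) := by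
      rw [← sum_kron, sum_std_eq_one, Matrix.one_kronecker_one]
    rw [hone, hSblocks, ← Finset.sum_sub_distrib]
    refine psd_sum _ _ fun x _ => ?_
    rw [← kron_sub_right]
    refine psd_kron (psd_std x) ?_
    -- 1 - Sx x is PSD
    have hsum1 : ∑ cm : (Fin M → X) × Fin M,
          ((if cm.1 cm.2 = x then coef cm.1 cm.2 else 0 : ℝ) : ℂ) •
            ((1 : Matrix ι ι ℂ) - D cm.1 cm.2)
        = ((∑ cm : (Fin M → X) × Fin M,
              (if cm.1 cm.2 = x then coef cm.1 cm.2 else 0) : ℝ) : ℂ) • (1 : Matrix ι ι ℂ)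
            - Sx x := by
      simp only [smul_sub]
      rw [Finset.sum_sub_distrib, ← Finset.sum_smul, hSx]
      congr 2
      push_cast
      rfl
    have hdecomp : (1 : Matrix ι ι ℂ) - Sx x
        = ((1 - ∑ cm : (Fin M → X) × Fin M,
              (if cm.1 cm.2 = x then coef cm.1 cm.2 else 0) : ℝ) : ℂ) • 1
          + ∑ cm : (Fin M → X) × Fin M,
              ((if cm.1 cm.2 = x then coef cm.1 cm.2 else 0 : ℝ) : ℂ) •
                ((1 : Matrix ι ι ℂ) - D cm.1 cm.2) := by
      rw [hsum1]
      push_cast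
      rw [sub_smul, one_smul]
      abel
    rw [hdecomp]
    refine Matrix.PosSemidef.add (psd_smul Matrix.PosSemidef.one ?_)
      (psd_sum _ _ fun cm _ => psd_smul (hDle _ _) ?_)
    · have := hax x
      linarith
    · split_ifs with h
      · exact hcoef0 _ _
      · exact le_refl 0
  -- trace formula for the success side
  have htr1 : ∀ (c : Fin M → X) (m : Fin M),
      retr (ρXB * T (c, m)) = (w c / M) * retr (ρB (c m) * D c m) := by
    intro c m
    have h2 : (ρXB * T (c, m)).trace
        = ∑ x, ((p x : ℂ) * ((coef c m : ℝ) : ℂ)) *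
            (if x = c m then (ρB x * D c m).trace else 0) := by
      rw [hρXB, Finset.sum_mul, trace_sum]
      refine Finset.sum_congr rfl fun x _ => ?_
      rw [hT, smul_mul_assoc, mul_smul_comm, trace_smul, trace_smul, trace_kron_std]
      simp only [smul_eq_mul, Complex.real_smul]
      ring
    rw [retr, h2]
    simp only [mul_ite, mul_zero]
    rw [Finset.sum_ite_eq' Finset.univ (c m)]
    simp only [Finset.mem_univ, if_pos]
    rw [show ((p (c m) : ℂ) * ((coef c m : ℝ) : ℂ)) = (((p (c m) * coef c m : ℝ)) : ℂ) by
      push_cast; ring]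
    rw [Complex.re_ofReal_mul, mul_comm (p (c m)) (coef c m), hcoefp]
    rfl
  -- index bookkeeping for the POVM
  set N : ℕ := Fintype.card ((Fin M → X) × Fin M) with hN
  set e : Fin N ≃ (Fin M → X) × Fin M := (Fintype.equivFin _).symm with he
  set Pov : Fin (N + 1) → Matrix (X × ι) (X × ι) ℂ := fun i =>
    if h : (i : ℕ) < N then T (e ⟨i, h⟩) else 1 - S with hPov
  have hPovc : ∀ j : Fin N, Pov j.castSucc = T (e j) := by
    intro j
    have hlt : ((j.castSucc : Fin (N+1)) : ℕ) < N := by simpa using j.isLt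
    rw [hPov]
    simp only
    rw [dif_pos hlt]
    congr 1
  have hPovl : Pov (Fin.last N) = 1 - S := by
    rw [hPov]
    simp only
    rw [dif_neg (by simp)]
  have hPovpsd : ∀ i, (Pov i).PosSemidef := by
    intro i
    rw [hPov]
    simp only
    split_ifs with h
    · exact hTpsd _
    · exact hcompl
  have hPovsum : ∑ i, Pov i = 1 := by
    rw [Fin.sum_univ_castSucc]
    rw [Finset.sum_congr rfl fun j _ => hPovc j, hPovl]
    rw [Equiv.sum_comp e T, ← hS]
    abel
  -- PSD of ρXB
  have hρXBpsd : ρXB.PosSemidef := by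
    rw [hρXB]
    refine psd_sum _ _ fun x _ => ?_
    rw [show p x • (single x x (1:ℂ) ⊗ₖ ρB x)
        = ((p x : ℝ) : ℂ) • (single x x (1:ℂ) ⊗ₖ ρB x) from by
      ext ij kl
      simp [Matrix.smul_apply, Complex.real_smul]]
    exact psd_smul (psd_kron (psd_std x) (hρB x).1) (hp x)
  -- success sum
  have hsum_p : ∑ cm : (Fin M → X) × Fin M,
      (w cm.1 / M) * retr (ρB (cm.1 cm.2) * D cm.1 cm.2) = P := by
    rw [hP, Fintype.sum_prod_type, Finset.sum_comm, Finset.mul_sum]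
    refine Finset.sum_congr rfl fun m _ => ?_
    rw [Finset.mul_sum]
    refine Finset.sum_congr rfl fun c _ => ?_
    rw [hw]
    ring
  -- the key bound on the infimum
  set r : ℝ := Real.log M + (α / (α - 1)) * Real.log P with hr
  have hI : (r : EReal) ≤
      ⨅ (σB : Matrix ι ι ℂ) (_ : σB.PosSemidef ∧ σB.trace = 1),
        measuredRenyiDiv α ρXB ((Matrix.diagonal fun x => ((p x : ℝ) : ℂ)) ⊗ₖ σB) := by
    refine le_iInf fun σB => le_iInf fun hσ => ?_
    set sg : Matrix (X × ι) (X × ι) ℂ :=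
      (Matrix.diagonal fun x => ((p x : ℝ) : ℂ)) ⊗ₖ σB with hsg
    have hsgpsd : sg.PosSemidef := by
      refine psd_kron (Matrix.PosSemidef.diagonal ?_) hσ.1
      intro x
      exact Complex.zero_le_real.mpr (hp x)
    -- trace formula for the divergence side
    have htr2 : ∀ (c : Fin M → X) (m : Fin M),
        retr (sg * T (c, m)) = (w c / M) * retr (σB * D c m) := by
      intro c m
      have h2 : (sg * T (c, m)).trace
          = (((coef c m * p (c m) : ℝ)) : ℂ) * (σB * D c m).trace := by
        rw [hsg, hT]
        rw [mul_smul_comm, ← Matrix.mul_kronecker_mul, diag_mul_std, smul_kronecker,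
          trace_smul, trace_smul, Matrix.trace_kronecker, trace_std]
        simp only [smul_eq_mul, one_mul]
        push_cast
        ring
      rw [retr, h2, Complex.re_ofReal_mul, hcoefp]
      rfl
    have hsum_q : ∑ cm : (Fin M → X) × Fin M,
        (w cm.1 / M) * retr (σB * D cm.1 cm.2) = 1 / M := by
      rw [Fintype.sum_prod_type]
      have hrow : ∀ c : Fin M → X,
          ∑ m, (w c / M) * retr (σB * D c m) = w c / M := by
        intro c
        rw [← Finset.mul_sum]
        have : ∑ m, retr (σB * D c m) = 1 := by
          have : (σB * ∑ m, D c m).trace = 1 := by rw [hDsum c, mul_one, hσ.2]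
          rw [show ∑ m, retr (σB * D c m) = retr (σB * ∑ m, D c m) from by
            rw [retr, Finset.mul_sum, trace_sum, Complex.re_sum]; rfl]
          rw [retr, this]
          rfl
        rw [this, mul_one]
      rw [Finset.sum_congr rfl fun c _ => hrow c, ← Finset.sum_div, hwsum]
    -- choose the POVM in the supremum
    rw [measuredRenyiDiv]
    refine le_iSup_of_le (N + 1) ?_
    refine le_iSup_of_le Pov ?_
    refine le_iSup_of_le hPovpsd ?_
    refine le_iSup_of_le hPovsum ?_
    rw [renyiDivE]
    split_ifs with hcond
    · -- the classical inequality
      have habs : ∀ i, retr (sg * Pov i) = 0 → retr (ρXB * Pov i) = 0 :=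
        hcond.resolve_left (not_lt.mpr hα.le)
      rw [EReal.coe_le_coe_iff]
      set pp : Fin N → ℝ := fun j => retr (ρXB * T (e j)) with hpp
      set qq : Fin N → ℝ := fun j => retr (sg * T (e j)) with hqq
      have hpp0 : ∀ j, 0 ≤ pp j := fun j => retr_mul_nonneg hρXBpsd (hTpsd _)
      have hqq0 : ∀ j, 0 ≤ qq j := fun j => retr_mul_nonneg hsgpsd (hTpsd _)
      have habs' : ∀ j, qq j = 0 → pp j = 0 := by
        intro j h
        have := habs j.castSucc
        rw [hPovc j] at this
        exact this h
      have hppsum : ∑ j, pp j = P := by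
        rw [hpp]
        rw [Equiv.sum_comp e (fun cm => retr (ρXB * T cm))]
        rw [Finset.sum_congr rfl fun cm _ => htr1 cm.1 cm.2]
        exact hsum_p
      have hqqsum : ∑ j, qq j = 1 / M := by
        rw [hqq]
        rw [Equiv.sum_comp e (fun cm => retr (sg * T cm))]
        rw [Finset.sum_congr rfl fun cm _ => htr2 cm.1 cm.2]
        exact hsum_q
      -- Hölder
      have hhold := Real.inner_le_weight_mul_Lp_of_nonneg Finset.univ hα.le qq
        (fun j => pp j / qq j) hqq0 (fun j => div_nonneg (hpp0 j) (hqq0 j))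
      have hL : ∑ j, qq j * (pp j / qq j) = P := by
        rw [← hppsum]
        refine Finset.sum_congr rfl fun j _ => ?_
        by_cases h : qq j = 0
        · rw [h, zero_mul, habs' j h]
        · field_simp
      have hRterm : ∀ j, qq j * (pp j / qq j) ^ α = pp j ^ α * qq j ^ (1 - α) := by
        intro j
        by_cases h : qq j = 0
        · rw [h, zero_mul, habs' j h, Real.zero_rpow (by positivity), zero_mul]
        · have hq : 0 < qq j := lt_of_le_of_ne (hqq0 j) (Ne.symm h)
          rw [Real.div_rpow (hpp0 j) (hqq0 j)]
          rw [Real.rpow_sub hq, Real.rpow_one]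
          field_simp
      set T0 : ℝ := ∑ j, pp j ^ α * qq j ^ (1 - α) with hT0
      have hhold2 : P ≤ (1 / M) ^ (1 - α⁻¹) * T0 ^ α⁻¹ := by
        rw [← hL, ← hqqsum, hT0]
        rw [← Finset.sum_congr rfl fun j _ => hRterm j]
        exact hhold
      have hT0nonneg : 0 ≤ T0 :=
        Finset.sum_nonneg fun j _ => mul_nonneg (Real.rpow_nonneg (hpp0 j) _)
          (Real.rpow_nonneg (hqq0 j) _)
      have hT0pos : 0 < T0 := by
        rcases lt_or_eq_of_le hT0nonneg with h | h
        · exact h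
        · exfalso
          rw [← h, Real.zero_rpow (by positivity), mul_zero] at hhold2
          linarith
      -- total sum
      set Tall : ℝ := ∑ i : Fin (N + 1),
        retr (ρXB * Pov i) ^ α * retr (sg * Pov i) ^ (1 - α) with hTall
      have hTle : T0 ≤ Tall := by
        rw [hTall, Fin.sum_univ_castSucc]
        have hlast : 0 ≤ retr (ρXB * Pov (Fin.last N)) ^ α *
            retr (sg * Pov (Fin.last N)) ^ (1 - α) := by
          refine mul_nonneg (Real.rpow_nonneg ?_ _) (Real.rpow_nonneg ?_ _)
          · exact retr_mul_nonneg hρXBpsd (hPovpsd _)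
          · exact retr_mul_nonneg hsgpsd (hPovpsd _)
        have hcast : ∑ j : Fin N, retr (ρXB * Pov j.castSucc) ^ α *
            retr (sg * Pov j.castSucc) ^ (1 - α) = T0 := by
          rw [hT0]
          refine Finset.sum_congr rfl fun j _ => ?_
          rw [hPovc j]
        rw [hcast]
        linarith
      have hTallpos : 0 < Tall := lt_of_lt_of_le hT0pos hTle
      -- logs
      have hlog1 : Real.log P ≤ (1 - α⁻¹) * Real.log (1 / M) + α⁻¹ * Real.log T0 := by
        calc Real.log P ≤ Real.log ((1 / M) ^ (1 - α⁻¹) * T0 ^ α⁻¹) :=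
              Real.log_le_log hPpos hhold2
          _ = (1 - α⁻¹) * Real.log (1 / M) + α⁻¹ * Real.log T0 := by
              rw [Real.log_mul (by positivity) (by positivity),
                Real.log_rpow (by positivity), Real.log_rpow hT0pos]
      have hlog2 : Real.log T0 ≤ Real.log Tall := Real.log_le_log hT0pos hTle
      have hlogM : Real.log (1 / (M:ℝ)) = -Real.log M := by
        rw [one_div, Real.log_inv]
      rw [hlogM] at hlog1
      -- final arithmetic
      rw [hr]
      have he1 : (α / (α - 1)) * (1 - α⁻¹) = 1 := by field_simp
      have he2 : (α / (α - 1)) * α⁻¹ = (α - 1)⁻¹ := by field_simp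
      have hc : 0 < α / (α - 1) := by positivity
      have key : (α / (α - 1)) * Real.log P ≤
          (α / (α - 1)) * ((1 - α⁻¹) * (-Real.log M) + α⁻¹ * Real.log T0) :=
        mul_le_mul_of_nonneg_left hlog1 hc.le
      have key2 : (α - 1)⁻¹ * Real.log T0 ≤ (α - 1)⁻¹ * Real.log Tall :=
        mul_le_mul_of_nonneg_left hlog2 (by positivity)
      calc Real.log M + (α / (α - 1)) * Real.log P
          ≤ Real.log M + (α / (α - 1)) * ((1 - α⁻¹) * (-Real.log M) + α⁻¹ * Real.log T0) :=
            by linarith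
        _ = (α - 1)⁻¹ * Real.log T0 := by
            rw [mul_add, ← mul_assoc, ← mul_assoc, he1, he2]
            ring
        _ ≤ (α - 1)⁻¹ * Real.log Tall := key2
        _ = (α - 1)⁻¹ * Real.log (∑ i, retr (ρXB * Pov i) ^ α *
              retr (sg * Pov i) ^ (1 - α)) := by rw [← hTall]
    · exact le_top
  -- final EReal assembly
  set I : EReal := ⨅ (σB : Matrix ι ι ℂ) (_ : σB.PosSemidef ∧ σB.trace = 1),
    measuredRenyiDiv α ρXB ((Matrix.diagonal fun x => ((p x : ℝ) : ℂ)) ⊗ₖ σB) with hIdef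
  rcases eq_or_ne I ⊤ with htop | htop
  · rw [htop]
    rw [EReal.sub_top, EReal.coe_mul_bot_of_pos (by positivity), EReal.neg_bot, EReal.exp_top]
    exact le_top
  · have hbot : I ≠ ⊥ := by
      intro h
      rw [h, le_bot_iff] at hI
      exact EReal.coe_ne_bot r hI
    set Ir : ℝ := I.toReal with hIr
    have hIeq : I = (Ir : EReal) := (EReal.coe_toReal htop hbot).symm
    rw [hIeq]
    rw [show ((Real.log M : ℝ) : EReal) - (Ir : EReal) = ((Real.log M - Ir : ℝ) : EReal) from
      (EReal.coe_sub _ _)]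
    rw [show (((α - 1) / α : ℝ) : EReal) * ((Real.log M - Ir : ℝ) : EReal)
        = ((((α - 1) / α) * (Real.log M - Ir) : ℝ) : EReal) from (EReal.coe_mul _ _).symm]
    rw [show -((((α - 1) / α) * (Real.log M - Ir) : ℝ) : EReal)
        = ((-(((α - 1) / α) * (Real.log M - Ir)) : ℝ) : EReal) from (EReal.coe_neg _).symm]
    rw [EReal.exp_coe]
    refine ENNReal.ofReal_le_ofReal ?_
    have hrI : r ≤ Ir := by
      rw [hIeq] at hI
      exact EReal.coe_le_coe_iff.mp hI
    rw [← Real.exp_log hPpos]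
    refine Real.exp_le_exp.mpr ?_
    rw [hr] at hrI
    have h4 : ((α - 1) / α) * (Real.log M - Ir)
        ≤ ((α - 1) / α) * (-((α / (α - 1)) * Real.log P)) :=
      mul_le_mul_of_nonneg_left (by linarith) (by positivity)
    have h5 : ((α - 1) / α) * (-((α / (α - 1)) * Real.log P)) = -Real.log P := by
      field_simp
    linarith

end
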